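/- Fix χ > 0, γ ∈ ℝ, and 0 < α < (χ/2) e^{−(1+γ)}, and let r̃₁_b ∈ (ρ, ∞) be the unique solution of ψ(r) = α in (ρ, ∞). Define g(r) := (2α)⁻¹(log(χ r) − γ) for r > 0. Then for every initial value r⁽⁰⁾ ≥ ρ, the iterates defined by r⁽ⁿ⁺¹⁾ := g(r⁽ⁿ⁾) converge to r̃₁_b as n → ∞. -/

import Mathlib

open Real Set Filter Topology

set_option maxHeartbeats 1600000 in
/-- Inverse fixed-point iteration (42): for `0 < α < (χ/2)e^{−(1+γ)}` and `r̃₁_b ∈ (ρ, ∞)`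
the unique solution there of `ψ(r) = α`, the iterates of `g(r) := (2α)⁻¹(log(χ r) − γ)`
starting at any `r⁽⁰⁾ ≥ ρ` converge to `r̃₁_b`. -/
theorem stmt9 (χ γ α : ℝ) (hχ : 0 < χ) (hα : 0 < α)
    (hα' : α < (χ / 2) * Real.exp (-(1 + γ)))
    (r1b : ℝ) (hr1b : r1b ∈ Set.Ioi (Real.exp (γ + 1) / χ))
    (hψ : (2 * r1b)⁻¹ * (Real.log (χ * r1b) - γ) = α) :
    ∀ r0 : ℝ, Real.exp (γ + 1) / χ ≤ r0 →
      Tendsto (fun n => (fun r => (2 * α)⁻¹ * (Real.log (χ * r) - γ))^[n] r0)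
        atTop (𝓝 r1b) := by
  intro r0 hr0
  set ρ : ℝ := Real.exp (γ + 1) / χ with hρdef
  set g : ℝ → ℝ := fun r => (2 * α)⁻¹ * (Real.log (χ * r) - γ) with hgdef
  have hgr : ∀ r, g r = (2 * α)⁻¹ * (Real.log (χ * r) - γ) := fun r => by rw [hgdef]
  clear_value ρ g
  have hρpos : 0 < ρ := hρdef ▸ div_pos (Real.exp_pos _) hχ
  have hρr1b : ρ < r1b := hr1b
  have hr1bpos : 0 < r1b := hρpos.trans hρr1b
  have h2α : 0 < 2 * α := by linarith
  have hχρ : χ * ρ = Real.exp (γ + 1) := by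
    rw [hρdef, mul_div_cancel₀ _ hχ.ne']
  have hlogρ : Real.log (χ * ρ) = γ + 1 := by
    rw [hχρ, Real.log_exp]
  -- 2αρ < 1
  have hexp : Real.exp (-(1 + γ)) * Real.exp (γ + 1) = 1 := by
    rw [← Real.exp_add, show -(1 + γ) + (γ + 1) = 0 by ring, Real.exp_zero]
  have h2αρ : 2 * α * ρ < 1 := by
    have h1 : 2 * α * ρ < 2 * ((χ / 2) * Real.exp (-(1 + γ))) * ρ := by
      have := mul_pos (Real.exp_pos (-(1+γ))) hρpos
      nlinarith
    have h2 : 2 * ((χ / 2) * Real.exp (-(1 + γ))) * ρ = 1 := by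
      rw [hρdef, show (2:ℝ) * (χ / 2 * Real.exp (-(1 + γ))) * (Real.exp (γ + 1) / χ)
        = (Real.exp (-(1 + γ)) * Real.exp (γ + 1)) * (χ / χ) by ring, div_self hχ.ne',
        mul_one, hexp]
    linarith
  -- fixed point equation : 2 α r1b = log (χ r1b) - γ
  have hfixeq : Real.log (χ * r1b) - γ = 2 * α * r1b := by
    have h2r : (2 * r1b) ≠ 0 := by positivity
    field_simp at hψ
    rw [mul_comm r1b χ] at hψ
    nlinarith [hψ]
  have hlogr1b : γ + 1 < Real.log (χ * r1b) := by
    have : Real.log (χ * ρ) < Real.log (χ * r1b) :=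
      Real.log_lt_log (by positivity) (by nlinarith)
    rwa [hlogρ] at this
  have h2αr1b : 1 < 2 * α * r1b := by linarith
  have hgfix : g r1b = r1b := by
    rw [hgr, hfixeq]
    field_simp
  -- g is monotone on positives
  have hgmono : ∀ x y : ℝ, 0 < x → x ≤ y → g x ≤ g y := by
    intro x y hx hxy
    have : Real.log (χ * x) ≤ Real.log (χ * y) :=
      Real.log_le_log (by positivity) (by nlinarith)
    have h := inv_pos.mpr h2α
    rw [hgr, hgr]
    nlinarith
  -- key concavity lemma: strict positivity of log(χx) - γ - 2αx on [ρ, r1b)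
  have hkey : ∀ x : ℝ, ρ ≤ x → x < r1b → 2 * α * x < Real.log (χ * x) - γ := by
    intro x hx hxlt
    have hxpos : 0 < x := hρpos.trans_le hx
    have hD : 0 < r1b - ρ := by linarith
    obtain ⟨a, b, hapos, hbnn, hab, hcomb⟩ :
        ∃ a b : ℝ, 0 < a ∧ 0 ≤ b ∧ a + b = 1 ∧ a * ρ + b * r1b = x := by
      refine ⟨(r1b - x) / (r1b - ρ), (x - ρ) / (r1b - ρ),
        div_pos (by linarith) hD, div_nonneg (by linarith) hD.le, ?_, ?_⟩
      · field_simp; ring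
      · field_simp; ring
    have hlog : a • Real.log ρ + b • Real.log r1b ≤ Real.log (a • ρ + b • r1b) :=
      strictConcaveOn_log_Ioi.concaveOn.2 (Set.mem_Ioi.mpr hρpos)
        (Set.mem_Ioi.mpr hr1bpos) hapos.le hbnn hab
    simp only [smul_eq_mul] at hlog
    rw [hcomb] at hlog
    have hlogχx : Real.log (χ * x) = Real.log χ + Real.log x :=
      Real.log_mul hχ.ne' hxpos.ne'
    have hlogχρ : Real.log (χ * ρ) = Real.log χ + Real.log ρ :=
      Real.log_mul hχ.ne' hρpos.ne'
    have hlogχr : Real.log (χ * r1b) = Real.log χ + Real.log r1b :=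
      Real.log_mul hχ.ne' hr1bpos.ne'
    have hc : a * Real.log χ + b * Real.log χ = Real.log χ := by
      rw [← add_mul, hab, one_mul]
    have h1 : a * Real.log (χ * ρ) + b * Real.log (χ * r1b) ≤ Real.log (χ * x) := by
      rw [hlogχx, hlogχρ, hlogχr]
      nlinarith [hlog, hc]
    have hfixeq' : Real.log (χ * r1b) = 2 * α * r1b + γ := by linarith
    rw [hlogρ, hfixeq'] at h1
    have hγ : γ * a + γ * b = γ := by rw [← mul_add, hab, mul_one]
    have h2x : 2 * α * x = 2 * α * (a * ρ) + 2 * α * (b * r1b) := by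
      rw [← hcomb]; ring
    have ha2 : 2 * α * (a * ρ) < a := by nlinarith [mul_pos hapos (sub_pos.mpr h2αρ)]
    linarith [h1, hγ, h2x, ha2]
  have hkey' : ∀ x : ℝ, ρ ≤ x → x ≤ r1b → x ≤ g x := by
    intro x hx hxle
    rcases eq_or_lt_of_le hxle with h | h
    · rw [h, hgfix]
    · have hlt := hkey x hx h
      rw [hgr]
      calc x = (2 * α)⁻¹ * (2 * α * x) := by field_simp
        _ ≤ (2 * α)⁻¹ * (Real.log (χ * x) - γ) :=
          mul_le_mul_of_nonneg_left hlt.le (inv_pos.mpr h2α).le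
  -- the iterates
  set s : ℕ → ℝ := fun n => g^[n] r0 with hs
  have hssucc : ∀ n, s (n + 1) = g (s n) := by
    intro n; rw [hs]; simp [Function.iterate_succ_apply']
  have hs0 : s 0 = r0 := rfl
  rcases le_or_gt r0 r1b with hcase | hcase
  · -- monotone increasing case
    have hbounds : ∀ n, ρ ≤ s n ∧ s n ≤ r1b := by
      intro n
      induction n with
      | zero => exact ⟨hr0, hcase⟩
      | succ n ih =>
        constructor
        · rw [hssucc]
          exact le_trans ih.1 (hkey' _ ih.1 ih.2)
        · rw [hssucc, ← hgfix]
          exact hgmono _ _ (hρpos.trans_le ih.1) ih.2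
    have hmono : Monotone s := by
      apply monotone_nat_of_le_succ
      intro n
      rw [hssucc]
      exact hkey' _ (hbounds n).1 (hbounds n).2
    have hbdd : BddAbove (Set.range s) := ⟨r1b, by rintro _ ⟨n, rfl⟩; exact (hbounds n).2⟩
    have htend : Tendsto s atTop (𝓝 (⨆ n, s n)) := tendsto_atTop_ciSup hmono hbdd
    set L : ℝ := ⨆ n, s n with hL
    have hLle : L ≤ r1b := ciSup_le fun n => (hbounds n).2
    have hLge : ρ ≤ L := le_trans (hbounds 0).1 (le_ciSup hbdd 0)
    have hLpos : 0 < L := hρpos.trans_le hLge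
    have hgL : g L = L := by
      have h1 : Tendsto (fun n => s (n + 1)) atTop (𝓝 L) :=
        htend.comp (tendsto_add_atTop_nat 1)
      have hcont : ContinuousAt g L := by
        rw [show g = fun r => (2 * α)⁻¹ * (Real.log (χ * r) - γ) from funext hgr]
        apply ContinuousAt.mul continuousAt_const
        apply ContinuousAt.sub _ continuousAt_const
        exact (Real.continuousAt_log (by positivity)).comp
          (continuousAt_const.mul continuousAt_id)
      have h2 : Tendsto (fun n => g (s n)) atTop (𝓝 (g L)) :=
        (hcont.tendsto).comp htend
      have h3 : (fun n => g (s n)) = fun n => s (n + 1) := by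
        funext n; rw [hssucc]
      rw [h3] at h2
      exact tendsto_nhds_unique h2 h1
    have hLeq : L = r1b := by
      by_contra hne
      have hLlt : L < r1b := lt_of_le_of_ne hLle hne
      have hk := hkey L hLge hLlt
      have heq : (2 * α)⁻¹ * (Real.log (χ * L) - γ) = L := by rw [← hgr]; exact hgL
      have heq2 : Real.log (χ * L) - γ = 2 * α * L := by
        have h4 : (2 * α) * ((2 * α)⁻¹ * (Real.log (χ * L) - γ)) = (2 * α) * L := by
          rw [heq]
        rw [← mul_assoc, mul_inv_cancel₀ h2α.ne', one_mul] at h4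
        linarith
      linarith
    rw [← hLeq]
    exact htend
  · -- contraction case : r0 > r1b
    set k : ℝ := (2 * α * r1b)⁻¹ with hk
    have hkpos : 0 < k := inv_pos.mpr (by positivity)
    have hklt : k < 1 := inv_lt_one_of_one_lt₀ h2αr1b
    have hstep : ∀ x : ℝ, r1b ≤ x → r1b ≤ g x ∧ g x - r1b ≤ k * (x - r1b) := by
      intro x hx
      have hxpos : 0 < x := hr1bpos.trans_le hx
      constructor
      · rw [← hgfix]; exact hgmono _ _ hr1bpos hx
      · have hdiv : 0 < x / r1b := by positivity
        have hlog1 : Real.log (x / r1b) ≤ x / r1b - 1 := Real.log_le_sub_one_of_pos hdiv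
        have hlogd : Real.log (χ * x) - Real.log (χ * r1b) = Real.log (x / r1b) := by
          rw [Real.log_div hxpos.ne' hr1bpos.ne', Real.log_mul hχ.ne' hxpos.ne',
            Real.log_mul hχ.ne' hr1bpos.ne']
          ring
        have hgx : g x - r1b = (2 * α)⁻¹ * Real.log (x / r1b) := by
          rw [hgr, ← hlogd]
          have hr : r1b = (2 * α)⁻¹ * (Real.log (χ * r1b) - γ) := by
            rw [hfixeq]; field_simp
          linear_combination -hr
        rw [hgx]
        have h1 : (2 * α)⁻¹ * Real.log (x / r1b) ≤ (2 * α)⁻¹ * (x / r1b - 1) :=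
          mul_le_mul_of_nonneg_left hlog1 (inv_pos.mpr h2α).le
        have h2 : (2 * α)⁻¹ * (x / r1b - 1) = k * (x - r1b) := by
          rw [hk]; field_simp
        linarith
    have hgeom : ∀ n, r1b ≤ s n ∧ s n - r1b ≤ k ^ n * (r0 - r1b) := by
      intro n
      induction n with
      | zero => rw [hs0]; exact ⟨hcase.le, by norm_num⟩
      | succ n ih =>
        have h := hstep (s n) ih.1
        refine ⟨by rw [hssucc]; exact h.1, ?_⟩
        rw [hssucc]
        calc g (s n) - r1b ≤ k * (s n - r1b) := h.2
          _ ≤ k * (k ^ n * (r0 - r1b)) := by nlinarith [ih.2, hkpos]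
          _ = k ^ (n + 1) * (r0 - r1b) := by ring
    have hub : Tendsto (fun n => r1b + k ^ n * (r0 - r1b)) atTop (𝓝 r1b) := by
      have h0 : Tendsto (fun n : ℕ => k ^ n) atTop (𝓝 0) :=
        tendsto_pow_atTop_nhds_zero_of_lt_one hkpos.le hklt
      have := (h0.mul_const (r0 - r1b)).const_add r1b
      simpa using this
    apply tendsto_of_tendsto_of_tendsto_of_le_of_le tendsto_const_nhds hub
    · intro n; exact (hgeom n).1
    · intro n
      show s n ≤ r1b + k ^ n * (r0 - r1b)
      linarith [(hgeom n).2]
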